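/- Suppose the (n+p)×(n+m) system pencil [[A - λE, B],[C, D]] is transformed by constant invertible matrices U (acting on the first n rows) and Z (acting on all columns) into block form [[A₁-λE₁, *, *, *],[0, A₂-λE₂, B₂, *],[0, 0, 0, B₃],[0, C₂, D₂, *]] with A₁-λE₁ of full row rank over F(λ), A₂-λE₂ regular of size n₂, and B₃ square invertible. Then the normal rank r of G(λ) = C(λE-A)⁻¹B + D satisfies r = normal rank of [[A₂-λE₂, B₂],[C₂, D₂]] minus n₂. -/

import Mathlib

set_option synthInstance.maxHeartbeats 1000000

open Matrix

/-- Embed a constant matrix over F into matrices over the rational functions F(λ). -/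
noncomputable def constMat {F : Type*} [Field F] {a b : ℕ}
    (M : Matrix (Fin a) (Fin b) F) : Matrix (Fin a) (Fin b) (RatFunc F) :=
  M.map (algebraMap F (RatFunc F))

/-- The (possibly rectangular) matrix pencil A - λE viewed over F(λ). -/
noncomputable def pencil {F : Type*} [Field F] {a b : ℕ}
    (A E : Matrix (Fin a) (Fin b) F) : Matrix (Fin a) (Fin b) (RatFunc F) :=
  constMat A - (RatFunc.X : RatFunc F) • constMat E

set_option maxHeartbeats 1000000

section aux
open Module
variable {K : Type*} [Field K]

/-- finrank of a product of submodules. -/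
lemma finrank_submodule_prod {V V' : Type*} [AddCommGroup V] [Module K V]
    [AddCommGroup V'] [Module K V'] [FiniteDimensional K V] [FiniteDimensional K V']
    (p : Submodule K V) (q : Submodule K V') :
    finrank K (p.prod q) = finrank K p + finrank K q := by
  have e : (p.prod q) ≃ₗ[K] p × q :=
    { toFun := fun x => (⟨x.val.1, x.prop.1⟩, ⟨x.val.2, x.prop.2⟩)
      invFun := fun y => ⟨(y.1.val, y.2.val), ⟨y.1.prop, y.2.prop⟩⟩
      map_add' := fun _ _ => rfl
      map_smul' := fun _ _ => rfl
      left_inv := fun _ => rfl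
      right_inv := fun _ => rfl }
  rw [e.finrank_eq, Module.finrank_prod]

lemma rank_submatrix'' {m n m' n' : Type*} [Fintype m] [Fintype n] [Fintype m'] [Fintype n']
    (A : Matrix m n K) (e₁ : m' ≃ m) (e₂ : n' ≃ n) :
    (A.submatrix e₁ e₂).rank = A.rank := by
  rw [Matrix.rank, Matrix.rank, Matrix.mulVecLin_submatrix, LinearMap.range_comp,
    LinearMap.range_comp,
    show LinearMap.funLeft K K e₂.symm = LinearEquiv.funCongrLeft K K e₂.symm from rfl,
    LinearEquiv.range, Submodule.map_top,
    show LinearMap.funLeft K K e₁ = LinearEquiv.funCongrLeft K K e₁ from rfl]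
  exact LinearEquiv.finrank_map_eq _ _

lemma rank_fromBlocks_of_rank_eq_card {m₁ m₂ n₁ n₂ : Type*}
    [Fintype m₁] [Fintype m₂] [Fintype n₁] [Fintype n₂]
    [DecidableEq m₁] [DecidableEq m₂] [DecidableEq n₁] [DecidableEq n₂]
    (X : Matrix m₁ n₁ K) (Y : Matrix m₁ n₂ K) (W : Matrix m₂ n₂ K)
    (hX : X.rank = Fintype.card m₁) :
    (Matrix.fromBlocks X Y 0 W).rank = Fintype.card m₁ + W.rank := by
  have hsurj : Function.Surjective X.mulVecLin := by
    rw [← LinearMap.range_eq_top]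
    apply Submodule.eq_top_of_finrank_eq
    rw [show finrank K (LinearMap.range X.mulVecLin) = X.rank from rfl, hX,
      Module.finrank_fintype_fun_eq_card]
  set M := Matrix.fromBlocks X Y 0 W with hM
  let φ := LinearEquiv.sumArrowLequivProdArrow m₁ m₂ K K
  have key : Submodule.map ((φ : ((m₁ ⊕ m₂) → K) ≃ₗ[K] _) : ((m₁ ⊕ m₂) → K) →ₗ[K] ((m₁ → K) × (m₂ → K)))
      (LinearMap.range M.mulVecLin)
      = (⊤ : Submodule K (m₁ → K)).prod (LinearMap.range W.mulVecLin) := by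
    apply le_antisymm
    · rintro _ ⟨_, ⟨v, rfl⟩, rfl⟩
      refine ⟨trivial, ⟨v ∘ Sum.inr, ?_⟩⟩
      have h := Matrix.fromBlocks_mulVec X Y (0 : Matrix m₂ n₁ K) W v
      ext j
      simp [φ, h, hM, Matrix.mulVecLin_apply]
    · rintro ⟨s, t⟩ ⟨-, ⟨y, rfl⟩⟩
      obtain ⟨x, hx⟩ := hsurj (s - Y *ᵥ y)
      refine ⟨M *ᵥ Sum.elim x y, ⟨Sum.elim x y, rfl⟩, ?_⟩
      have hMe := Matrix.fromBlocks_mulVec X Y (0 : Matrix m₂ n₁ K) W (Sum.elim x y)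
      have hx' : X *ᵥ x = s - Y *ᵥ y := hx
      ext j
      · simp [φ, hM, hMe, hx', Matrix.mulVecLin_apply]
      · simp [φ, hM, hMe, Matrix.mulVecLin_apply]
  calc M.rank = finrank K (LinearMap.range M.mulVecLin) := rfl
    _ = finrank K (Submodule.map ((φ : ((m₁ ⊕ m₂) → K) ≃ₗ[K] _) : ((m₁ ⊕ m₂) → K) →ₗ[K] ((m₁ → K) × (m₂ → K)))
          (LinearMap.range M.mulVecLin)) := (LinearEquiv.finrank_map_eq _ _).symm
    _ = finrank K ((⊤ : Submodule K (m₁ → K)).prod (LinearMap.range W.mulVecLin)) := by rw [key]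
    _ = finrank K (⊤ : Submodule K (m₁ → K)) + W.rank := finrank_submodule_prod _ _
    _ = Fintype.card m₁ + W.rank := by
        rw [finrank_top, Module.finrank_fintype_fun_eq_card]

lemma rank_mul_eq_of_inv_right {m n n' : Type*} [Fintype n] [Fintype n'] [DecidableEq n] [DecidableEq n']
    (A : Matrix m n K) (Zm : Matrix n n' K) (Zim : Matrix n' n K)
    (h1 : Zm * Zim = 1) : (A * Zm).rank = A.rank := by
  refine le_antisymm (Matrix.rank_mul_le_left _ _) ?_
  have hA : A = A * Zm * Zim := by rw [Matrix.mul_assoc, h1, Matrix.mul_one]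
  calc A.rank = (A * Zm * Zim).rank := by rw [← hA]
    _ ≤ (A * Zm).rank := Matrix.rank_mul_le_left _ _

end aux

/-- If the system pencil [[A-λE, B],[C, D]] is reduced by constant invertible
transformations U (on the first n rows) and Z (on the columns) to the special
Kronecker-like block form [[A₁-λE₁, *, *, *],[0, A₂-λE₂, B₂, *],[0,0,0,B₃],
[0, C₂, D₂, *]], with A₁-λE₁ of full row rank over F(λ), A₂-λE₂ regular and
B₃ invertible, then the normal rank r of G(λ) = C(λE-A)⁻¹B + D equals the
normal rank of [[A₂-λE₂, B₂],[C₂, D₂]] minus n₂. -/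
theorem normal_rank_from_special_klf (F : Type*) [Field F]
    (n p m n₁ n₂ n₃ q₁ w : ℕ)
    (A E : Matrix (Fin n) (Fin n) F) (B : Matrix (Fin n) (Fin m) F)
    (C : Matrix (Fin p) (Fin n) F) (D : Matrix (Fin p) (Fin m) F)
    (hreg : (pencil A E).det ≠ 0)
    (G : Matrix (Fin p) (Fin m) (RatFunc F))
    (hG : G = constMat C * ((RatFunc.X : RatFunc F) • constMat E - constMat A)⁻¹
            * constMat B + constMat D)
    -- the constant transformation matrices
    (U : Matrix (Fin n) (Fin n) F) (hU : IsUnit U.det)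
    (Z : Matrix (Fin n ⊕ Fin m) ((Fin q₁ ⊕ Fin n₂) ⊕ (Fin w ⊕ Fin n₃)) F)
    (Zi : Matrix ((Fin q₁ ⊕ Fin n₂) ⊕ (Fin w ⊕ Fin n₃)) (Fin n ⊕ Fin m) F)
    (hZ : Z * Zi = 1 ∧ Zi * Z = 1)
    (e : Fin n ≃ (Fin n₁ ⊕ Fin n₂) ⊕ Fin n₃)
    -- the blocks of the reduced pencil
    (A₁ E₁ : Matrix (Fin n₁) (Fin q₁) F) (A₂ E₂ : Matrix (Fin n₂) (Fin n₂) F)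
    (B₂ : Matrix (Fin n₂) (Fin w) F) (B₃ : Matrix (Fin n₃) (Fin n₃) F)
    (C₂ : Matrix (Fin p) (Fin n₂) F) (D₂ : Matrix (Fin p) (Fin w) F)
    (Y₁₂ : Matrix (Fin n₁) (Fin n₂) (RatFunc F))
    (Y₁₃ : Matrix (Fin n₁) (Fin w) (RatFunc F))
    (Y₁₄ : Matrix (Fin n₁) (Fin n₃) (RatFunc F))
    (Y₂₄ : Matrix (Fin n₂) (Fin n₃) (RatFunc F))
    (Y₄₄ : Matrix (Fin p) (Fin n₃) (RatFunc F))
    (h₁ : (pencil A₁ E₁).rank = n₁)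
    (h₂ : (pencil A₂ E₂).det ≠ 0)
    (h₃ : IsUnit B₃.det)
    (hT : Matrix.fromBlocks (constMat U) 0 0 (1 : Matrix (Fin p) (Fin p) (RatFunc F))
          * Matrix.fromBlocks (pencil A E) (constMat B) (constMat C) (constMat D)
          * (Z.map (algebraMap F (RatFunc F)))
        = (Matrix.fromBlocks
            (Matrix.fromRows (Matrix.fromBlocks (pencil A₁ E₁) Y₁₂ 0 (pencil A₂ E₂)) 0)
            (Matrix.fromRows (Matrix.fromBlocks Y₁₃ Y₁₄ (constMat B₂) Y₂₄)
              (Matrix.fromCols 0 (constMat B₃)))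
            (Matrix.fromCols 0 (constMat C₂))
            (Matrix.fromCols (constMat D₂) Y₄₄)).submatrix
            (Equiv.sumCongr e (Equiv.refl (Fin p))) _root_.id) :
    G.rank + n₂ =
      (Matrix.fromBlocks (pencil A₂ E₂) (constMat B₂) (constMat C₂) (constMat D₂)).rank := by
  classical
  have hPdet : IsUnit (pencil A E).det := isUnit_iff_ne_zero.mpr hreg
  letI : Invertible (pencil A E) := (pencil A E).invertibleOfIsUnitDet hPdet
  set S := Matrix.fromBlocks (pencil A E) (constMat B) (constMat C) (constMat D) with hS
  -- G is the Schur complement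
  have hGS : G = constMat D - constMat C * (pencil A E)⁻¹ * constMat B := by
    have hneg : ((RatFunc.X : RatFunc F) • constMat E - constMat A) = -(pencil A E) := by
      rw [pencil, neg_sub]
    have hmul : (-(pencil A E)) * (-(pencil A E)⁻¹) = 1 := by
      rw [neg_mul_neg, Matrix.mul_nonsing_inv _ hPdet]
    have hinv : (-(pencil A E))⁻¹ = -(pencil A E)⁻¹ := Matrix.inv_eq_right_inv hmul
    rw [hG, hneg, hinv]
    simp only [Matrix.mul_neg, Matrix.neg_mul]
    abel
  -- Step A : S.rank = n + G.rank
  have hSfact := Matrix.fromBlocks_eq_of_invertible₁₁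
    (pencil A E) (constMat B) (constMat C) (constMat D)
  simp only [Matrix.invOf_eq_nonsing_inv] at hSfact
  have hdetL : IsUnit (Matrix.fromBlocks (1 : Matrix (Fin n) (Fin n) (RatFunc F)) 0
      (constMat C * (pencil A E)⁻¹) 1).det := by
    rw [Matrix.det_fromBlocks_zero₁₂]; simp
  have hdetR : IsUnit (Matrix.fromBlocks (1 : Matrix (Fin n) (Fin n) (RatFunc F))
      ((pencil A E)⁻¹ * constMat B) 0 1).det := by
    rw [Matrix.det_fromBlocks_zero₂₁]; simp
  have hrankP : (pencil A E).rank = Fintype.card (Fin n) :=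
    Matrix.rank_of_isUnit _ ((Matrix.isUnit_iff_isUnit_det _).mpr hPdet)
  have hrankS : S.rank = n + G.rank := by
    rw [hS, hSfact, ← hGS]
    rw [Matrix.rank_mul_eq_left_of_isUnit_det _ _ hdetR]
    rw [Matrix.rank_mul_eq_right_of_isUnit_det _ _ hdetL]
    rw [rank_fromBlocks_of_rank_eq_card _ _ _ hrankP, Fintype.card_fin]
  -- Step B : rank of transformed pencil equals rank of S
  have hZone : (Z.map (⇑(algebraMap F (RatFunc F)) : F → RatFunc F))
      * (Zi.map (⇑(algebraMap F (RatFunc F)) : F → RatFunc F)) = 1 := by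
    rw [← Matrix.map_mul, hZ.1,
      Matrix.map_one _ (algebraMap F (RatFunc F)).map_zero (algebraMap F (RatFunc F)).map_one]
  have hUdet : IsUnit (Matrix.fromBlocks (constMat U) 0 0
      (1 : Matrix (Fin p) (Fin p) (RatFunc F))).det := by
    rw [Matrix.det_fromBlocks_zero₂₁, Matrix.det_one, mul_one, constMat,
      ← RingHom.mapMatrix_apply, ← RingHom.map_det]
    exact hU.map _
  have hLHS : (Matrix.fromBlocks (constMat U) 0 0 (1 : Matrix (Fin p) (Fin p) (RatFunc F))
      * S * (Z.map (⇑(algebraMap F (RatFunc F)) : F → RatFunc F))).rank = S.rank := by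
    rw [rank_mul_eq_of_inv_right _ _ _ hZone,
      Matrix.rank_mul_eq_right_of_isUnit_det _ _ hUdet]
  -- Step C : rank of the block matrix on the right
  set W := Matrix.fromBlocks (pencil A₂ E₂) (constMat B₂) (constMat C₂) (constMat D₂) with hW
  set M₀ := Matrix.fromBlocks (pencil A₁ E₁) (Matrix.fromCols Y₁₂ Y₁₃)
    (0 : Matrix (Fin n₂ ⊕ Fin p) (Fin q₁) (RatFunc F)) W with hM₀
  set N := Matrix.fromRows Y₁₄ (Matrix.fromRows Y₂₄ Y₄₄) with hN
  set M' := Matrix.fromBlocks M₀ N (0 : Matrix (Fin n₃) (Fin q₁ ⊕ (Fin n₂ ⊕ Fin w)) (RatFunc F))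
    (constMat B₃) with hM'
  set BigM := (Matrix.fromBlocks
            (Matrix.fromRows (Matrix.fromBlocks (pencil A₁ E₁) Y₁₂ 0 (pencil A₂ E₂)) 0)
            (Matrix.fromRows (Matrix.fromBlocks Y₁₃ Y₁₄ (constMat B₂) Y₂₄)
              (Matrix.fromCols 0 (constMat B₃)))
            (Matrix.fromCols 0 (constMat C₂))
            (Matrix.fromCols (constMat D₂) Y₄₄)) with hBigM
  let σ : ((Fin n₁ ⊕ Fin n₂) ⊕ Fin n₃) ⊕ Fin p ≃ (Fin n₁ ⊕ (Fin n₂ ⊕ Fin p)) ⊕ Fin n₃ :=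
    { toFun := fun x => match x with
        | .inl (.inl (.inl a)) => .inl (.inl a)
        | .inl (.inl (.inr b)) => .inl (.inr (.inl b))
        | .inl (.inr c) => .inr c
        | .inr d => .inl (.inr (.inr d))
      invFun := fun x => match x with
        | .inl (.inl a) => .inl (.inl (.inl a))
        | .inl (.inr (.inl b)) => .inl (.inl (.inr b))
        | .inl (.inr (.inr d)) => .inr d
        | .inr c => .inl (.inr c)
      left_inv := by rintro (((a|b)|c)|d) <;> rfl
      right_inv := by rintro ((a|(b|d))|c) <;> rfl }
  let τ : (Fin q₁ ⊕ Fin n₂) ⊕ (Fin w ⊕ Fin n₃) ≃ (Fin q₁ ⊕ (Fin n₂ ⊕ Fin w)) ⊕ Fin n₃ :=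
    { toFun := fun x => match x with
        | .inl (.inl a) => .inl (.inl a)
        | .inl (.inr b) => .inl (.inr (.inl b))
        | .inr (.inl c) => .inl (.inr (.inr c))
        | .inr (.inr d) => .inr d
      invFun := fun x => match x with
        | .inl (.inl a) => .inl (.inl a)
        | .inl (.inr (.inl b)) => .inl (.inr b)
        | .inl (.inr (.inr c)) => .inr (.inl c)
        | .inr d => .inr (.inr d)
      left_inv := by rintro ((a|b)|(c|d)) <;> rfl
      right_inv := by rintro ((a|(b|c))|d) <;> rfl }
  have hBigEq : BigM = M'.submatrix σ τ := by
    ext i j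
    rcases i with (((a|b)|c)|d) <;> rcases j with ((a'|b')|(c'|d')) <;> rfl
  have hrankBig : BigM.rank = M'.rank := by
    rw [hBigEq]; exact rank_submatrix'' _ σ τ
  have hB₃rank : ((constMat B₃)ᵀ).rank = Fintype.card (Fin n₃) := by
    apply Matrix.rank_of_isUnit
    rw [Matrix.isUnit_iff_isUnit_det, Matrix.det_transpose, constMat,
      ← RingHom.mapMatrix_apply, ← RingHom.map_det]
    exact h₃.map _
  have hrankM' : M'.rank = n₃ + M₀.rank := by
    have h1 : M'.rank = (M'ᵀ).rank := (Matrix.rank_transpose M').symm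
    have h2 : M'ᵀ = Matrix.fromBlocks M₀ᵀ 0 Nᵀ (constMat B₃)ᵀ := by
      rw [hM', Matrix.fromBlocks_transpose, Matrix.transpose_zero]
    have h3 : ((Matrix.fromBlocks M₀ᵀ (0 : Matrix _ (Fin n₃) (RatFunc F)) Nᵀ
        ((constMat B₃)ᵀ)).submatrix Sum.swap Sum.swap)
        = Matrix.fromBlocks ((constMat B₃)ᵀ) Nᵀ 0 M₀ᵀ :=
      Matrix.fromBlocks_submatrix_sum_swap_sum_swap _ _ _ _
    have h4 : (Matrix.fromBlocks M₀ᵀ (0 : Matrix _ (Fin n₃) (RatFunc F)) Nᵀ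
        ((constMat B₃)ᵀ)).rank = (Matrix.fromBlocks ((constMat B₃)ᵀ) Nᵀ 0 M₀ᵀ).rank := by
      rw [← h3]
      exact (rank_submatrix'' _ (Equiv.sumComm _ _) (Equiv.sumComm _ _)).symm
    rw [h1, h2, h4, rank_fromBlocks_of_rank_eq_card _ _ _ hB₃rank,
      Fintype.card_fin, Matrix.rank_transpose]
  have hrankM₀ : M₀.rank = n₁ + W.rank := by
    rw [hM₀, rank_fromBlocks_of_rank_eq_card _ _ _ (by rw [h₁, Fintype.card_fin]),
      Fintype.card_fin]
  -- put everything together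
  have hsub : (BigM.submatrix (⇑(Equiv.sumCongr e (Equiv.refl (Fin p)))) _root_.id).rank
      = BigM.rank := by
    rw [show (_root_.id : ((Fin q₁ ⊕ Fin n₂) ⊕ (Fin w ⊕ Fin n₃)) → _)
      = ⇑(Equiv.refl ((Fin q₁ ⊕ Fin n₂) ⊕ (Fin w ⊕ Fin n₃))) from rfl]
    exact rank_submatrix'' _ _ _
  have hfinal : S.rank = BigM.rank := by
    rw [← hLHS, hT, hsub]
  have hcard : n = (n₁ + n₂) + n₃ := by
    simpa using Fintype.card_congr e
  have : n + G.rank = n₃ + (n₁ + W.rank) := by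
    rw [← hrankS, hfinal, hrankBig, hrankM', hrankM₀]
  omega
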